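/- For every Boolean function f : F_2^n → F_2 with f(0) = 0 and every integer k ≥ 1, C[f^{∘k}, 0] ≥ C[f, 0]^k, where C[g, x] is the certificate complexity of g at x. -/

import Mathlib

open Finset

namespace Paper

/-- `f` is constant on the set `S`. -/
def ConstOn {n : ℕ} (f : (Fin n → ZMod 2) → ZMod 2) (S : Set (Fin n → ZMod 2)) : Prop :=
  ∃ c, ∀ y ∈ S, f y = c

/-- The subcube of points agreeing with `x` on the coordinates in `J`. -/
def cube {n : ℕ} (J : Finset (Fin n)) (x : Fin n → ZMod 2) : Set (Fin n → ZMod 2) :=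
  {y | ∀ i ∈ J, y i = x i}

/-- Certificate complexity of `f` at `x`. -/
noncomputable def C {n : ℕ} (f : (Fin n → ZMod 2) → ZMod 2) (x : Fin n → ZMod 2) : ℕ :=
  sInf {d | ∃ J : Finset (Fin n), J.card = d ∧ ConstOn f (cube J x)}

/-- Minimum certificate complexity of `f`. -/
noncomputable def Cmin {n : ℕ} (f : (Fin n → ZMod 2) → ZMod 2) : ℕ :=
  ⨅ x, C f x

/-- The affine subspace cut out by the parity constraints `⟨α j, ·⟩ = b j`. -/
def affSol {n : ℕ} (d : ℕ) (α : Fin d → Fin n → ZMod 2) (b : Fin d → ZMod 2) :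
    Set (Fin n → ZMod 2) :=
  {y | ∀ j, ∑ i, α j i * y i = b j}

/-- Parity certificate complexity of `f` at `x`. -/
noncomputable def pC {n : ℕ} (f : (Fin n → ZMod 2) → ZMod 2) (x : Fin n → ZMod 2) : ℕ :=
  sInf {d | ∃ (α : Fin d → Fin n → ZMod 2) (b : Fin d → ZMod 2),
    x ∈ affSol d α b ∧ ConstOn f (affSol d α b)}

/-- Minimum parity certificate complexity (parity kill number). -/
noncomputable def pCmin {n : ℕ} (f : (Fin n → ZMod 2) → ZMod 2) : ℕ := ⨅ x, pC f x

/-- Maximum parity certificate complexity. -/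
noncomputable def pCmax {n : ℕ} (f : (Fin n → ZMod 2) → ZMod 2) : ℕ := ⨆ x, pC f x

/-- Block composition `f ∘ g`. -/
def compose {n m : ℕ} (f : (Fin n → ZMod 2) → ZMod 2) (g : (Fin m → ZMod 2) → ZMod 2) :
    (Fin (m * n) → ZMod 2) → ZMod 2 :=
  fun y => f fun i => g fun j => y (finProdFinEquiv (j, i))

/-- The `k`-fold composition power of `f` (`power f k` agrees with `f^{∘k}` for `k ≥ 1`). -/
def power {n : ℕ} (f : (Fin n → ZMod 2) → ZMod 2) : (k : ℕ) → (Fin (n ^ k) → ZMod 2) → ZMod 2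
  | 0 => fun x => x (Fin.cast (pow_zero n).symm 0)
  | k + 1 => fun x => f fun i => power f k fun j =>
      x (Fin.cast (pow_succ n k).symm (finProdFinEquiv (j, i)))

/-- `f` is an affine function `x ↦ b ⊕ ⟨x, α⟩`. -/
def IsAffine {n : ℕ} (f : (Fin n → ZMod 2) → ZMod 2) : Prop :=
  ∃ (b : ZMod 2) (α : Fin n → ZMod 2), ∀ x, f x = b + ∑ i, α i * x i

/-- Parity decision trees on `n` input bits. -/
inductive PDT (n : ℕ) : Type
  | leaf : ZMod 2 → PDT n
  | node : (Fin n → ZMod 2) → PDT n → PDT n → PDT n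

/-- Evaluation of a parity decision tree. -/
def PDT.eval {n : ℕ} : PDT n → (Fin n → ZMod 2) → ZMod 2
  | .leaf b, _ => b
  | .node α t0 t1, x => if ∑ i, α i * x i = 0 then t0.eval x else t1.eval x

/-- Depth of a parity decision tree. -/
def PDT.depth {n : ℕ} : PDT n → ℕ
  | .leaf _ => 0
  | .node _ t0 t1 => max t0.depth t1.depth + 1

/-- Parity decision tree complexity of `f`. -/
noncomputable def DTp {n : ℕ} (f : (Fin n → ZMod 2) → ZMod 2) : ℕ :=
  sInf {d | ∃ T : PDT n, T.depth ≤ d ∧ ∀ x, T.eval x = f x}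

/-- Identify a bit with an element of `{-1, 1} ⊆ ℝ`. -/
noncomputable def toPM (b : Bool) : ℝ := if b then -1 else 1

/-- The Fourier coefficient `f̂(S)` of `f : {-1,1}^n → ℝ`. -/
noncomputable def fourier {n : ℕ} (f : (Fin n → Bool) → ℝ) (S : Finset (Fin n)) : ℝ :=
  (∑ x : Fin n → Bool, f x * ∏ i ∈ S, toPM (x i)) / 2 ^ n

open Classical in
/-- The Sort function as a real-valued function on `{-1,1}^4`. -/
noncomputable def sortR (x : Fin 4 → ℝ) : ℝ :=
  if (x 0 ≥ x 1 ∧ x 1 ≥ x 2 ∧ x 2 ≥ x 3) ∨ (x 0 ≤ x 1 ∧ x 1 ≤ x 2 ∧ x 2 ≤ x 3) then 1 else -1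

/-- The Sort function over `F_2` (ordering `0 < 1`). -/
def sortF (x : Fin 4 → ZMod 2) : ZMod 2 :=
  if ((x 1).val ≤ (x 0).val ∧ (x 2).val ≤ (x 1).val ∧ (x 3).val ≤ (x 2).val) ∨
     ((x 0).val ≤ (x 1).val ∧ (x 1).val ≤ (x 2).val ∧ (x 2).val ≤ (x 3).val) then 1 else 0

lemma power_zero_eq {n : ℕ} (f : (Fin n → ZMod 2) → ZMod 2) (hf : f 0 = 0) :
    ∀ k, power f k 0 = 0
  | 0 => rfl
  | (k+1) => by
      show f (fun _ => power f k 0) = 0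
      simp only [power_zero_eq f hf k]
      exact hf

lemma C_le {n : ℕ} {g : (Fin n → ZMod 2) → ZMod 2} {x : Fin n → ZMod 2}
    {J : Finset (Fin n)} (h : ConstOn g (cube J x)) : C g x ≤ J.card :=
  Nat.sInf_le ⟨J, rfl, h⟩

lemma le_C {n : ℕ} {g : (Fin n → ZMod 2) → ZMod 2} {x : Fin n → ZMod 2} {m : ℕ}
    (h : ∀ J : Finset (Fin n), ConstOn g (cube J x) → m ≤ J.card) : m ≤ C g x := by
  apply le_csInf
  · refine ⟨(Finset.univ : Finset (Fin n)).card, Finset.univ, rfl, g x, fun y hy => ?_⟩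
    have : y = x := funext fun i => hy i (Finset.mem_univ i)
    rw [this]
  · rintro d ⟨J, rfl, hc⟩
    exact h J hc

lemma one_le_C_power_zero {n : ℕ} (f : (Fin n → ZMod 2) → ZMod 2) :
    1 ≤ C (power f 0) 0 := by
  apply le_C
  intro J hJ
  rw [Nat.one_le_iff_ne_zero, Ne, Finset.card_eq_zero]
  rintro rfl
  obtain ⟨c, hc⟩ := hJ
  have h0 : power f 0 (0 : Fin (n ^ 0) → ZMod 2) = c := hc 0 (by intro i hi; exact absurd hi (Finset.notMem_empty i))
  have h1 : power f 0 (fun _ => 1) = c := hc (fun _ => 1) (by intro i hi; exact absurd hi (Finset.notMem_empty i))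
  have : (0 : ZMod 2) = c := h0
  have h1' : (1 : ZMod 2) = c := h1
  rw [← this] at h1'
  exact one_ne_zero h1'

lemma key_step {n : ℕ} (f : (Fin n → ZMod 2) → ZMod 2) (hf : f 0 = 0) (k : ℕ) :
    C f 0 * C (power f k) 0 ≤ C (power f (k + 1)) 0 := by
  classical
  set h : (Fin (n ^ k) → ZMod 2) → ZMod 2 := power f k with hh
  set e : Fin (n ^ k) × Fin n ≃ Fin (n ^ (k + 1)) :=
    finProdFinEquiv.trans (finCongr (pow_succ n k).symm) with he
  apply le_C
  intro J hJ
  -- block certificates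
  set Ji : Fin n → Finset (Fin (n ^ k)) :=
    fun i => Finset.univ.filter (fun j => e (j, i) ∈ J) with hJi
  have memJi : ∀ i j, j ∈ Ji i ↔ e (j, i) ∈ J := by
    intro i j; simp [hJi]
  set S : Finset (Fin n) := Finset.univ.filter (fun i => C h 0 ≤ (Ji i).card) with hS
  -- f is constant (= 0) on cube S 0
  have hconst : ConstOn f (cube S 0) := by
    refine ⟨0, fun z hz => ?_⟩
    -- for each block, find a point in cube (Ji i) 0 where h takes value z i
    have hy : ∀ i : Fin n, ∃ w : Fin (n ^ k) → ZMod 2,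
        w ∈ cube (Ji i) 0 ∧ h w = z i := by
      intro i
      by_cases hzi : z i = 0
      · exact ⟨0, fun j _ => rfl, by rw [hzi, hh]; exact power_zero_eq f hf k⟩
      · have hiS : i ∉ S := by
          intro hiS
          exact hzi (hz i hiS)
        have hcard : ¬ C h 0 ≤ (Ji i).card := by
          intro hle
          exact hiS (by simp [hS, hle])
        have hnc : ¬ ConstOn h (cube (Ji i) 0) := fun hc => hcard (C_le hc)
        have : ∃ y ∈ cube (Ji i) 0, h y ≠ 0 := by
          by_contra hall
          push_neg at hall
          exact hnc ⟨0, hall⟩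
        obtain ⟨y, hy1, hy2⟩ := this
        have hone : ∀ a : ZMod 2, a ≠ 0 → a = 1 := by decide
        refine ⟨y, hy1, ?_⟩
        rw [hone _ hy2, hone _ hzi]
    choose w hw1 hw2 using hy
    set x : Fin (n ^ (k + 1)) → ZMod 2 :=
      fun a => w (e.symm a).2 (e.symm a).1 with hx
    have hxval : ∀ (i : Fin n) (j : Fin (n ^ k)),
        x (Fin.cast (pow_succ n k).symm (finProdFinEquiv (j, i))) = w i j := by
      intro i j
      show w (e.symm (e (j, i))).2 (e.symm (e (j, i))).1 = w i j
      rw [Equiv.symm_apply_apply]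
    have hxmem : x ∈ cube J 0 := by
      intro a ha
      have hmem : (e.symm a).1 ∈ Ji (e.symm a).2 := by
        rw [memJi]
        have : e ((e.symm a).1, (e.symm a).2) = a := by
          rw [Prod.mk.eta, Equiv.apply_symm_apply]
        rw [this]; exact ha
      exact hw1 _ _ hmem
    have hfx : power f (k + 1) x = f z := by
      show f (fun i => h fun j =>
        x (Fin.cast (pow_succ n k).symm (finProdFinEquiv (j, i)))) = f z
      congr 1
      funext i
      rw [show (fun j => x (Fin.cast (pow_succ n k).symm (finProdFinEquiv (j, i)))) = w i
          from funext (hxval i)]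
      exact hw2 i
    obtain ⟨c, hc⟩ := hJ
    have h0mem : (0 : Fin (n ^ (k + 1)) → ZMod 2) ∈ cube J 0 := fun i _ => rfl
    have hc0 : c = 0 := by
      rw [← hc 0 h0mem]
      exact power_zero_eq f hf (k + 1)
    have := hc x hxmem
    rw [hfx, hc0] at this
    exact this
  have hCS : C f 0 ≤ S.card := C_le hconst
  -- counting: J.card = ∑ i, (Ji i).card
  set Q : Finset (Fin (n ^ k) × Fin n) := J.image e.symm with hQ
  have hQmem : ∀ p, p ∈ Q ↔ e p ∈ J := by
    intro p
    simp only [hQ, Finset.mem_image]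
    constructor
    · rintro ⟨a, ha, rfl⟩
      rw [Equiv.apply_symm_apply]; exact ha
    · intro hp
      exact ⟨e p, hp, Equiv.symm_apply_apply _ _⟩
  have hQcard : Q.card = J.card := Finset.card_image_of_injective _ e.symm.injective
  have hfiber : Q.card = ∑ i : Fin n, (Q.filter (fun p => p.2 = i)).card :=
    Finset.card_eq_sum_card_fiberwise (fun p _ => Finset.mem_univ p.2)
  have hJicard : ∀ i, (Ji i).card = (Q.filter (fun p => p.2 = i)).card := by
    intro i
    apply Finset.card_bij (fun j _ => (j, i))
    · intro j hj
      rw [Finset.mem_filter, hQmem]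
      exact ⟨(memJi i j).mp hj, rfl⟩
    · intro j1 _ j2 _ hj
      exact (Prod.mk.injEq _ _ _ _ ▸ hj).1
    · intro p hp
      rw [Finset.mem_filter, hQmem] at hp
      refine ⟨p.1, ?_, ?_⟩
      · rw [memJi, ← hp.2, Prod.mk.eta]; exact hp.1
      · rw [← hp.2]
  have hsum : ∑ i : Fin n, (Ji i).card = J.card := by
    rw [← hQcard, hfiber]
    exact Finset.sum_congr rfl fun i _ => hJicard i
  calc C f 0 * C h 0 ≤ S.card * C h 0 := Nat.mul_le_mul_right _ hCS
    _ = ∑ _i ∈ S, C h 0 := by rw [Finset.sum_const, smul_eq_mul]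
    _ ≤ ∑ i ∈ S, (Ji i).card := Finset.sum_le_sum (fun i hi => by
        rw [hS, Finset.mem_filter] at hi; exact hi.2)
    _ ≤ ∑ i : Fin n, (Ji i).card := Finset.sum_le_sum_of_subset (Finset.subset_univ S)
    _ = J.card := hsum

/-- `C[·, 0]` is supermultiplicative under composition powers when `f(0) = 0`. -/
theorem stmt4 {n : ℕ} (f : (Fin n → ZMod 2) → ZMod 2) (hf : f 0 = 0) (k : ℕ) (hk : 1 ≤ k) :
    C f 0 ^ k ≤ C (power f k) 0 := by
  clear hk
  induction k with
  | zero =>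
    rw [pow_zero]
    exact one_le_C_power_zero f
  | succ k ih =>
    calc C f 0 ^ (k + 1) = C f 0 * C f 0 ^ k := by ring
      _ ≤ C f 0 * C (power f k) 0 := Nat.mul_le_mul_left _ ih
      _ ≤ C (power f (k + 1)) 0 := key_step f hf k

end Paper
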